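/- There exists a constant C > 0 such that for every maintenance instance on a path with n ≥ 2 jobs and every feasible preemptive schedule with busy time a, there exists a feasible non-preemptive schedule with busy time at most C · a · log n. (A non-preemptive schedule with cost O(log |E|) times the cost of an optimal preemptive schedule always exists.) -/

import Mathlib

open MeasureTheory Set
open scoped ENNReal

/-- Feasibility of a non-preemptive schedule of jobs on a path: job `i` starts at `s i`
within its window and is processed during `[s i, s i + p i]`. -/
def PathNPFeasible {ι : Type*} (r d p : ι → ℝ) (s : ι → ℝ) : Prop :=
  ∀ i, r i ≤ s i ∧ s i + p i ≤ d i

/-- Feasibility of a preemptive schedule of jobs on a path: job `i` is processed during the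
measurable set `S i ⊆ [r i, d i]` of measure `p i`. -/
def PathPFeasible {ι : Type*} (r d p : ι → ℝ) (S : ι → Set ℝ) : Prop :=
  ∀ i, MeasurableSet (S i) ∧ S i ⊆ Set.Icc (r i) (d i) ∧
    volume (S i) = ENNReal.ofReal (p i)

/-- The busy time of a non-preemptive schedule: the measure of the union of the
processing intervals (= the total disconnected time on a path). -/
noncomputable def npBusy {ι : Type*} (p : ι → ℝ) (s : ι → ℝ) : ℝ≥0∞ :=
  volume (⋃ i, Set.Icc (s i) (s i + p i))

/-- The busy time of a preemptive schedule: the measure of the union of the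
processing sets (= the total disconnected time on a path). -/
noncomputable def pBusy {ι : Type*} (S : ι → Set ℝ) : ℝ≥0∞ :=
  volume (⋃ i, S i)

/-- **Lemma 1 (upper bound on the power of preemption on a path).** There is a constant
`C > 0` such that for every maintenance instance on a path with `n ≥ 2` jobs and every
feasible preemptive schedule of busy time `a`, there is a feasible non-preemptive schedule of
busy time at most `C · a · log n`. -/
theorem power_of_preemption_upper :
    ∃ C : ℝ, 0 < C ∧
      ∀ (n : ℕ), 2 ≤ n → ∀ r d p : Fin n → ℝ,
        (∀ i, 0 ≤ p i) → (∀ i, r i + p i ≤ d i) →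
        ∀ S : Fin n → Set ℝ, PathPFeasible r d p S →
        ∀ a : ℝ, pBusy S = ENNReal.ofReal a →
        ∃ s : Fin n → ℝ, PathNPFeasible r d p s ∧
          npBusy p s ≤ ENNReal.ofReal (C * a * Real.log n) := by
  classical
  have hlog2 : 0 < Real.log 2 := Real.log_pos one_lt_two
  refine ⟨25 / Real.log 2, by positivity, ?_⟩
  intro n hn r d p hp hrd S hS a ha
  unfold pBusy at ha
  by_cases ha0 : a ≤ 0
  · -- degenerate case: all processing times are 0
    refine ⟨r, fun i => ⟨le_refl _, hrd i⟩, ?_⟩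
    have h0 : ∀ i, p i ≤ 0 := by
      intro i
      have h1 : volume (S i) ≤ ENNReal.ofReal a := ha ▸ measure_mono (subset_iUnion S i)
      rw [(hS i).2.2, ENNReal.ofReal_eq_zero.2 ha0] at h1
      exact ENNReal.ofReal_eq_zero.1 (le_antisymm h1 zero_le)
    have hz : npBusy p r ≤ 0 := by
      unfold npBusy
      refine le_trans (measure_iUnion_fintype_le _ _) ?_
      refine le_of_eq (Finset.sum_eq_zero fun i _ => ?_)
      rw [Real.volume_Icc]
      simp only [add_sub_cancel_left]
      exact ENNReal.ofReal_eq_zero.2 (h0 i)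
    exact le_trans hz zero_le
  push_neg at ha0
  -- main case : a > 0
  set U : Set ℝ := ⋃ i, S i with hU
  have hUmeas : MeasurableSet U := MeasurableSet.iUnion fun i => (hS i).1
  have hUvol : volume U = ENNReal.ofReal a := ha
  have hUfin : volume U ≠ ⊤ := by rw [hUvol]; exact ENNReal.ofReal_ne_top
  have hpa : ∀ i, p i ≤ a := by
    intro i
    have h1 : volume (S i) ≤ volume U := measure_mono (subset_iUnion S i)
    rw [(hS i).2.2, hUvol] at h1
    exact (ENNReal.ofReal_le_ofReal_iff ha0.le).1 h1
  set F : ℝ → ℝ := fun x => (volume (U ∩ Iic x)).toReal with hFdef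
  have hFfin : ∀ x, volume (U ∩ Iic x) ≠ ⊤ := fun x =>
    (lt_of_le_of_lt (measure_mono inter_subset_left) hUfin.lt_top).ne
  have hFmono : Monotone F := by
    intro x y hxy
    exact ENNReal.toReal_mono (hFfin y)
      (measure_mono (inter_subset_inter_right _ (Iic_subset_Iic.2 hxy)))
  have hF0 : ∀ x, 0 ≤ F x := fun x => ENNReal.toReal_nonneg
  have hFa : ∀ x, F x ≤ a := by
    intro x
    have h1 : volume (U ∩ Iic x) ≤ ENNReal.ofReal a := by
      rw [← hUvol]; exact measure_mono inter_subset_left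
    calc F x ≤ (ENNReal.ofReal a).toReal := ENNReal.toReal_mono ENNReal.ofReal_ne_top h1
    _ = a := ENNReal.toReal_ofReal ha0.le
  have hkey : ∀ i, F (r i) + p i ≤ F (d i) := by
    intro i
    have hrdi : r i ≤ d i := le_trans (by linarith [hp i]) (hrd i)
    have hSr : volume (S i ∩ Iic (r i)) = 0 := by
      refine measure_mono_null (fun x hx => ?_) (measure_singleton (r i))
      have h1 := (hS i).2.1 hx.1
      exact le_antisymm hx.2 h1.1
    have hsplit : volume (S i ∩ Iic (r i)) + volume (S i \ Iic (r i)) = volume (S i) :=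
      measure_inter_add_diff (S i) measurableSet_Iic
    have hSdiff : volume (S i \ Iic (r i)) = ENNReal.ofReal (p i) := by
      rw [hSr, zero_add] at hsplit; rw [hsplit, (hS i).2.2]
    have hsub2 : S i \ Iic (r i) ⊆ U ∩ Ioc (r i) (d i) := fun x hx =>
      ⟨subset_iUnion S i hx.1, lt_of_not_ge hx.2, ((hS i).2.1 hx.1).2⟩
    have hdisj : Disjoint (U ∩ Iic (r i)) (U ∩ Ioc (r i) (d i)) := by
      refine Disjoint.mono inter_subset_right inter_subset_right ?_
      exact Iic_disjoint_Ioc le_rfl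
    have hunion : volume (U ∩ Iic (r i)) + volume (U ∩ Ioc (r i) (d i)) =
        volume ((U ∩ Iic (r i)) ∪ (U ∩ Ioc (r i) (d i))) :=
      (measure_union hdisj (hUmeas.inter measurableSet_Ioc)).symm
    have hsubU : (U ∩ Iic (r i)) ∪ (U ∩ Ioc (r i) (d i)) ⊆ U ∩ Iic (d i) := by
      rintro x (hx | hx)
      · exact ⟨hx.1, le_trans hx.2 hrdi⟩
      · exact ⟨hx.1, hx.2.2⟩
    have hmain : volume (U ∩ Iic (r i)) + ENNReal.ofReal (p i) ≤ volume (U ∩ Iic (d i)) := by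
      rw [← hSdiff]
      calc volume (U ∩ Iic (r i)) + volume (S i \ Iic (r i))
          ≤ volume (U ∩ Iic (r i)) + volume (U ∩ Ioc (r i) (d i)) :=
            add_le_add le_rfl (measure_mono hsub2)
      _ = volume ((U ∩ Iic (r i)) ∪ (U ∩ Ioc (r i) (d i))) := hunion
      _ ≤ volume (U ∩ Iic (d i)) := measure_mono hsubU
    have h2 := ENNReal.toReal_mono (hFfin (d i)) hmain
    rwa [ENNReal.toReal_add (hFfin (r i)) ENNReal.ofReal_ne_top,
      ENNReal.toReal_ofReal (hp i)] at h2
  set K := Nat.log 2 n with hK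
  set q : ℕ → ℝ := fun k => a / 2 ^ (k + 1) with hq
  have hqpos : ∀ k, 0 < q k := fun k => by rw [hq]; positivity
  set X : ℕ → ℕ → ℝ := fun k j => sInf {x | (j : ℝ) * q k ≤ F x} with hX
  set kk : Fin n → ℕ := fun i => Nat.log 2 ⌊a / p i⌋₊ with hkk
  set jj : Fin n → ℕ := fun i => ⌊F (r i) / q (kk i)⌋₊ + 1 with hjj
  set s : Fin n → ℝ :=
    fun i => if a < p i * n then max (r i) (min (X (kk i) (jj i)) (d i - p i)) else r i with hs
  have hfeas : PathNPFeasible r d p s := by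
    intro i
    by_cases hb : a < p i * n
    · have hsi : s i = max (r i) (min (X (kk i) (jj i)) (d i - p i)) := by
        rw [hs]; simp only [if_pos hb]
      constructor
      · rw [hsi]; exact le_max_left _ _
      · rw [hsi]
        have h1 : max (r i) (min (X (kk i) (jj i)) (d i - p i)) ≤ d i - p i :=
          max_le (by linarith [hrd i]) (min_le_right _ _)
        linarith
    · have hsi : s i = r i := by rw [hs]; simp only [if_neg hb]
      rw [hsi]; exact ⟨le_refl _, hrd i⟩
  have hbigfacts : ∀ i, a < p i * n →
      Icc (s i) (s i + p i) ⊆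
        Icc (X (kk i) (jj i) - 2 * q (kk i)) (X (kk i) (jj i) + 2 * q (kk i))
      ∧ kk i ≤ K ∧ jj i < 2 ^ (kk i + 1) + 2 := by
    intro i hb
    have hnpos : (0:ℝ) < n := by positivity
    have hppos : 0 < p i := by nlinarith
    have hm1 : 1 ≤ ⌊a / p i⌋₊ := by
      refine Nat.le_floor ?_
      rw [Nat.cast_one, le_div_iff₀ hppos]; linarith [hpa i]
    have hfl : (⌊a / p i⌋₊ : ℝ) ≤ a / p i := Nat.floor_le (by positivity)
    have h2k : (2:ℝ) ^ kk i ≤ a / p i := by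
      calc ((2:ℝ) ^ kk i) = ((2 ^ kk i : ℕ) : ℝ) := by push_cast; ring
      _ ≤ (⌊a / p i⌋₊ : ℝ) := Nat.cast_le.2 (Nat.pow_log_le_self 2 (by omega))
      _ ≤ a / p i := hfl
    have h2k1 : a / p i < (2:ℝ) ^ (kk i + 1) := by
      have h1 : a / p i < ⌊a / p i⌋₊ + 1 := Nat.lt_floor_add_one _
      have h2 : ⌊a / p i⌋₊ + 1 ≤ 2 ^ (kk i + 1) := Nat.lt_pow_succ_log_self (by norm_num) _
      calc a / p i < (⌊a / p i⌋₊ : ℝ) + 1 := h1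
      _ ≤ ((2 ^ (kk i + 1) : ℕ) : ℝ) := by exact_mod_cast h2
      _ = (2:ℝ) ^ (kk i + 1) := by push_cast; ring
    have hpow1 : (0:ℝ) < 2 ^ (kk i + 1) := by positivity
    have hpow0 : (0:ℝ) < 2 ^ kk i := by positivity
    have hqlt : q (kk i) < p i := by
      rw [hq]
      rw [div_lt_iff₀ hpow1]
      have := (div_lt_iff₀ hppos).1 h2k1
      nlinarith
    have hp2q : p i ≤ 2 * q (kk i) := by
      simp only [hq]
      rw [show (2:ℝ) * (a / 2 ^ (kk i + 1)) = 2 * a / 2 ^ (kk i + 1) by ring,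
        le_div_iff₀ hpow1, pow_succ]
      nlinarith [(le_div_iff₀ hppos).1 h2k]
    have hq0 := hqpos (kk i)
    have hFr0 : 0 ≤ F (r i) / q (kk i) := div_nonneg (hF0 _) hq0.le
    have hjq_gt : F (r i) < (jj i : ℝ) * q (kk i) := by
      have h1 : F (r i) / q (kk i) < ⌊F (r i) / q (kk i)⌋₊ + 1 := Nat.lt_floor_add_one _
      have h2 := (div_lt_iff₀ hq0).1 h1
      simp only [hjj]; push_cast; linarith
    have hjq_le : (jj i : ℝ) * q (kk i) ≤ F (d i) := by
      have h1 : (⌊F (r i) / q (kk i)⌋₊ : ℝ) ≤ F (r i) / q (kk i) := Nat.floor_le hFr0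
      have h2 := (mul_le_mul_of_nonneg_right h1 hq0.le)
      rw [div_mul_cancel₀ _ hq0.ne'] at h2
      have h3 := hkey i
      simp only [hjj]; push_cast
      nlinarith
    have hne : Set.Nonempty {x | (jj i : ℝ) * q (kk i) ≤ F x} := ⟨d i, hjq_le⟩
    have hlb : ∀ x ∈ {x | (jj i : ℝ) * q (kk i) ≤ F x}, r i ≤ x := by
      intro x hx
      by_contra hc
      push_neg at hc
      exact not_lt.2 hx (lt_of_le_of_lt (hFmono hc.le) hjq_gt)
    have hXle : X (kk i) (jj i) ≤ d i := csInf_le ⟨r i, hlb⟩ hjq_le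
    have hXge : r i ≤ X (kk i) (jj i) := le_csInf hne hlb
    have hsi : s i = max (r i) (min (X (kk i) (jj i)) (d i - p i)) := by
      rw [hs]; simp only [if_pos hb]
    refine ⟨?_, ?_, ?_⟩
    · refine Icc_subset_Icc ?_ ?_
      · rw [hsi]
        refine le_trans (le_min (by linarith) (by linarith)) (le_max_right _ _)
      · rw [hsi]
        have hsle : max (r i) (min (X (kk i) (jj i)) (d i - p i)) ≤ X (kk i) (jj i) :=
          max_le hXge (min_le_left _ _)
        linarith
    · have hlt : a / p i < n := (div_lt_iff₀ hppos).2 (by linarith)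
      have hfln : ⌊a / p i⌋₊ ≤ n := le_of_lt ((Nat.floor_lt (by positivity)).2 hlt)
      exact Nat.log_mono_right hfln
    · have hle : F (r i) / q (kk i) ≤ ((2 ^ (kk i + 1) : ℕ) : ℝ) := by
        rw [div_le_iff₀ hq0]
        simp only [hq]
        push_cast
        have heq : (2:ℝ) ^ (kk i + 1) * (a / 2 ^ (kk i + 1)) = a := by
          field_simp
        rw [heq]
        exact hFa _
      have h4 : ⌊F (r i) / q (kk i)⌋₊ ≤ 2 ^ (kk i + 1) := by
        calc ⌊F (r i) / q (kk i)⌋₊ ≤ ⌊((2 ^ (kk i + 1) : ℕ) : ℝ)⌋₊ := Nat.floor_le_floor hle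
        _ = 2 ^ (kk i + 1) := Nat.floor_natCast _
      simp only [hjj]; omega
  -- covering set
  set B1 : Set ℝ := ⋃ i, ⋃ (_ : ¬ a < p i * n), Icc (r i) (r i + p i) with hB1
  set B2 : Set ℝ := ⋃ k ∈ Finset.range (K + 1), ⋃ j ∈ Finset.range (2 ^ (k + 1) + 2),
    Icc (X k j - 2 * q k) (X k j + 2 * q k) with hB2
  have hcov : (⋃ i, Icc (s i) (s i + p i)) ⊆ B1 ∪ B2 := by
    refine iUnion_subset fun i => ?_
    by_cases hb : a < p i * n
    · refine subset_union_of_subset_right ?_ _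
      obtain ⟨hsub, hkle, hjlt⟩ := hbigfacts i hb
      refine hsub.trans fun x hx => ?_
      simp only [hB2, mem_iUnion, exists_prop]
      exact ⟨kk i, Finset.mem_range.2 (by omega), jj i, Finset.mem_range.2 hjlt, hx⟩
    · refine subset_union_of_subset_left ?_ _
      have hsi : s i = r i := by rw [hs]; simp only [if_neg hb]
      rw [hsi]
      intro x hx
      simp only [hB1, mem_iUnion]
      exact ⟨i, hb, hx⟩
  have hvol1 : volume B1 ≤ ENNReal.ofReal a := by
    rw [hB1]
    refine le_trans (measure_iUnion_fintype_le _ _) ?_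
    have hbound : ∀ i : Fin n,
        volume (⋃ (_ : ¬ a < p i * n), Icc (r i) (r i + p i)) ≤ ENNReal.ofReal (a / n) := by
      intro i
      by_cases hb : a < p i * n
      · simp [hb]
      · have heq : (⋃ (_ : ¬ a < p i * ↑n), Icc (r i) (r i + p i)) = Icc (r i) (r i + p i) := by
          simp [hb]
        rw [heq, Real.volume_Icc]
        refine ENNReal.ofReal_le_ofReal ?_
        push_neg at hb
        have hnpos : (0:ℝ) < n := by positivity
        rw [add_sub_cancel_left, le_div_iff₀ hnpos]
        linarith
    calc ∑ i, volume (⋃ (_ : ¬ a < p i * n), Icc (r i) (r i + p i))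
        ≤ ∑ _i : Fin n, ENNReal.ofReal (a / n) := Finset.sum_le_sum fun i _ => hbound i
    _ = (n : ℝ≥0∞) * ENNReal.ofReal (a / n) := by
        rw [Finset.sum_const, Finset.card_univ, Fintype.card_fin, nsmul_eq_mul]
    _ = ENNReal.ofReal a := by
        rw [← ENNReal.ofReal_natCast n, ← ENNReal.ofReal_mul (Nat.cast_nonneg n)]
        congr 1
        field_simp
  have hvol2 : volume B2 ≤ ((K : ℝ≥0∞) + 1) * ENNReal.ofReal (12 * a) := by
    rw [hB2]
    refine le_trans (measure_biUnion_finset_le _ _) ?_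
    have hinner : ∀ k ∈ Finset.range (K + 1),
        volume (⋃ j ∈ Finset.range (2 ^ (k + 1) + 2), Icc (X k j - 2 * q k) (X k j + 2 * q k))
          ≤ ENNReal.ofReal (12 * a) := by
      intro k _
      refine le_trans (measure_biUnion_finset_le _ _) ?_
      have heach : ∀ j ∈ Finset.range (2 ^ (k + 1) + 2),
          volume (Icc (X k j - 2 * q k) (X k j + 2 * q k)) = ENNReal.ofReal (4 * q k) := by
        intro j _
        rw [Real.volume_Icc]
        congr 1
        ring
      calc ∑ j ∈ Finset.range (2 ^ (k + 1) + 2), volume (Icc (X k j - 2 * q k) (X k j + 2 * q k))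
          = ∑ _j ∈ Finset.range (2 ^ (k + 1) + 2), ENNReal.ofReal (4 * q k) :=
            Finset.sum_congr rfl heach
      _ = ((2 ^ (k + 1) + 2 : ℕ) : ℝ≥0∞) * ENNReal.ofReal (4 * q k) := by
          rw [Finset.sum_const, Finset.card_range, nsmul_eq_mul]
      _ = ENNReal.ofReal (((2 ^ (k + 1) + 2 : ℕ) : ℝ) * (4 * q k)) := by
          rw [← ENNReal.ofReal_natCast, ← ENNReal.ofReal_mul (Nat.cast_nonneg _)]
      _ ≤ ENNReal.ofReal (12 * a) := by
          refine ENNReal.ofReal_le_ofReal ?_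
          rw [hq]
          push_cast
          have ht2 : (2:ℝ) ≤ 2 ^ (k + 1) := by
            calc (2:ℝ) = 2 ^ 1 := by norm_num
            _ ≤ 2 ^ (k + 1) := by
                refine pow_le_pow_right₀ (by norm_num) (by omega)
          have htpos : (0:ℝ) < 2 ^ (k + 1) := by positivity
          have hexp : ((2:ℝ) ^ (k + 1) + 2) * (4 * (a / 2 ^ (k + 1)))
              = 4 * a + 8 * (a / 2 ^ (k + 1)) := by
            field_simp
            ring
          have hdiv : a / 2 ^ (k + 1) ≤ a / 2 :=
            div_le_div_of_nonneg_left ha0.le (by norm_num) ht2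
          rw [hexp]
          linarith
    calc ∑ k ∈ Finset.range (K + 1),
        volume (⋃ j ∈ Finset.range (2 ^ (k + 1) + 2), Icc (X k j - 2 * q k) (X k j + 2 * q k))
        ≤ ∑ _k ∈ Finset.range (K + 1), ENNReal.ofReal (12 * a) :=
          Finset.sum_le_sum hinner
    _ = ((K + 1 : ℕ) : ℝ≥0∞) * ENNReal.ofReal (12 * a) := by
        rw [Finset.sum_const, Finset.card_range, nsmul_eq_mul]
    _ = ((K : ℝ≥0∞) + 1) * ENNReal.ofReal (12 * a) := by push_cast; ring
  refine ⟨s, hfeas, ?_⟩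
  unfold npBusy
  have hKlog : (K : ℝ) * Real.log 2 ≤ Real.log n := by
    have h1 : ((2 ^ K : ℕ) : ℝ) ≤ (n : ℝ) := Nat.cast_le.2 (Nat.pow_log_le_self 2 (by omega))
    have h2 : (2:ℝ) ^ K ≤ (n : ℝ) := by push_cast at h1 ⊢; linarith
    have h3 := Real.log_le_log (by positivity) h2
    rwa [Real.log_pow] at h3
  have hlogn : Real.log 2 ≤ Real.log n := by
    refine Real.log_le_log (by norm_num) ?_
    exact_mod_cast hn
  calc volume (⋃ i, Icc (s i) (s i + p i)) ≤ volume (B1 ∪ B2) := measure_mono hcov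
  _ ≤ volume B1 + volume B2 := measure_union_le _ _
  _ ≤ ENNReal.ofReal a + ((K : ℝ≥0∞) + 1) * ENNReal.ofReal (12 * a) := add_le_add hvol1 hvol2
  _ = ENNReal.ofReal (a + ((K : ℝ) + 1) * (12 * a)) := by
      rw [show ((K : ℝ≥0∞) + 1) = (((K + 1 : ℕ) : ℝ≥0∞)) by push_cast; ring,
        ← ENNReal.ofReal_natCast, ← ENNReal.ofReal_mul (Nat.cast_nonneg _),
        ← ENNReal.ofReal_add ha0.le (mul_nonneg (Nat.cast_nonneg _) (by linarith))]
      congr 1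
      push_cast
      ring
  _ ≤ ENNReal.ofReal (25 / Real.log 2 * a * Real.log n) := by
      refine ENNReal.ofReal_le_ofReal ?_
      rw [div_mul_eq_mul_div, div_mul_eq_mul_div, le_div_iff₀ hlog2]
      have h1 := mul_le_mul_of_nonneg_left hKlog ha0.le
      have h2 := mul_le_mul_of_nonneg_left hlogn ha0.le
      nlinarith
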